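/- Let $H \in [0,1)$ and define $B(H) = \displaystyle\int_0^{\infty} \frac{H + (1-H)e^{-2t}}{\cosh(t)\sqrt{1 - (H+(1-H)e^{-2t})^2}}\,dt$. Then for every $\rho > 0$ and every $r > 0$, $\displaystyle\int_0^{r} \frac{x_\rho(t)}{\cosh(t)\sqrt{1 - x_\rho(t)^2}}\,dt \le B(H)$, where $x_\rho(t) = \dfrac{H\cosh(2\rho+2t) + \sinh(2\rho) - H\cosh(2\rho)}{\sinh(2\rho+2t)}$. -/

import Mathlib

open Real MeasureTheory

open Set Filter in
-- integrability of the dominating function c/√(e^{2t}-1) on (0,∞)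
lemma aux_dom_int (c : ℝ) (hc : 0 ≤ c) :
    IntegrableOn (fun t => c / Real.sqrt (Real.exp (2*t) - 1)) (Set.Ioi (0:ℝ)) := by
  have hderiv : ∀ t ∈ Set.Ioi (0:ℝ),
      HasDerivAt (fun t => c * Real.arctan (Real.sqrt (Real.exp (2*t) - 1)))
        (c / Real.sqrt (Real.exp (2*t) - 1)) t := by
    intro t ht
    have h2t : (0:ℝ) < 2*t := by simpa using (by linarith [mem_Ioi.mp ht] : 0 < 2*t)
    have hu : 1 < Real.exp (2*t) := by
      rw [← Real.exp_zero]; exact Real.exp_lt_exp.2 h2t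
    have hupos : 0 < Real.exp (2*t) - 1 := by linarith
    have h1 : HasDerivAt (fun t : ℝ => Real.exp (2*t) - 1) (Real.exp (2*t) * 2) t := by
      have := ((Real.hasDerivAt_exp (2*t)).comp t ((hasDerivAt_id t).const_mul 2))
      simpa using this.sub_const 1
    have h2 : HasDerivAt (fun t : ℝ => Real.sqrt (Real.exp (2*t) - 1))
        (1/(2*Real.sqrt (Real.exp (2*t) - 1)) * (Real.exp (2*t) * 2)) t :=
      (Real.hasDerivAt_sqrt hupos.ne').comp t h1
    have h3 := (Real.hasDerivAt_arctan (Real.sqrt (Real.exp (2*t) - 1))).comp t h2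
    have h4 := h3.const_mul c
    refine h4.congr_deriv ?_
    have hs : Real.sqrt (Real.exp (2*t) - 1) ≠ 0 := (Real.sqrt_pos.2 hupos).ne'
    rw [Real.sq_sqrt hupos.le]
    have he : Real.exp (2*t) ≠ 0 := (Real.exp_pos _).ne'
    field_simp
    ring
  have g'pos : ∀ t ∈ Set.Ioi (0:ℝ), 0 ≤ c / Real.sqrt (Real.exp (2*t) - 1) := by
    intro t _; positivity
  have hcont : ContinuousWithinAt (fun t => c * Real.arctan (Real.sqrt (Real.exp (2*t) - 1)))
      (Set.Ici 0) 0 := by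
    apply Continuous.continuousWithinAt
    continuity
  have htend : Tendsto (fun t => c * Real.arctan (Real.sqrt (Real.exp (2*t) - 1)))
      atTop (nhds (c * (Real.pi/2))) := by
    apply Tendsto.const_mul
    have h2 : Tendsto (fun t : ℝ => Real.sqrt (Real.exp (2*t) - 1)) atTop atTop := by
      apply tendsto_atTop_mono ?_ (tendsto_atTop_add_const_right _ (-1) Real.tendsto_exp_atTop)
      intro t
      rcases le_or_gt (Real.exp t) 1 with h | h
      · have := Real.sqrt_nonneg (Real.exp (2*t) - 1); linarith
      · have he2 : Real.exp (2*t) = Real.exp t * Real.exp t := by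
          rw [← Real.exp_add]; ring_nf
        have hsq : (Real.exp t - 1)^2 ≤ Real.exp (2*t) - 1 := by nlinarith
        have := Real.sqrt_le_sqrt hsq
        rwa [Real.sqrt_sq (by linarith)] at this
    exact (tendsto_nhds_of_tendsto_nhdsWithin Real.tendsto_arctan_atTop).comp h2
  exact integrableOn_Ioi_deriv_of_nonneg hcont hderiv g'pos htend


/-- For `H ∈ [0,1)`, `B(H) = ∫_0^∞ (H+(1-H)e^{-2t})/(cosh(t)√(1-(H+(1-H)e^{-2t})²)) dt`,
and for every `ρ > 0` and `r > 0`,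
`∫_0^r x_ρ(t)/(cosh(t)√(1-x_ρ(t)²)) dt ≤ B(H)`, where
`x_ρ(t) = (H cosh(2ρ+2t) + sinh(2ρ) - H cosh(2ρ)) / sinh(2ρ+2t)`. -/
theorem stmt_9 (H : ℝ) (hH : H ∈ Set.Ico (0 : ℝ) 1) (B : ℝ)
    (hB : B = ∫ t in Set.Ioi (0 : ℝ),
      (H + (1 - H) * Real.exp (-2 * t)) /
        (Real.cosh t * Real.sqrt (1 - (H + (1 - H) * Real.exp (-2 * t)) ^ 2)))
    (x : ℝ → ℝ → ℝ)
    (hx : ∀ ρ t, x ρ t = (H * Real.cosh (2 * ρ + 2 * t) + Real.sinh (2 * ρ) -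
      H * Real.cosh (2 * ρ)) / Real.sinh (2 * ρ + 2 * t)) :
    ∀ ρ > (0 : ℝ), ∀ r > (0 : ℝ),
      (∫ t in Set.Ioo (0 : ℝ) r,
        x ρ t / (Real.cosh t * Real.sqrt (1 - x ρ t ^ 2))) ≤ B := by
  obtain ⟨hH0, hH1⟩ := hH
  intro ρ hρ r hr
  set F : ℝ → ℝ := fun t => (H + (1 - H) * Real.exp (-2 * t)) /
      (Real.cosh t * Real.sqrt (1 - (H + (1 - H) * Real.exp (-2 * t)) ^ 2)) with hF
  have hc : (0:ℝ) ≤ 2 / Real.sqrt (1 - H) := by positivity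
  -- basic facts about v t := H + (1-H) e^{-2t}
  have hv0 : ∀ t : ℝ, 0 < H + (1 - H) * Real.exp (-2 * t) := by
    intro t
    have := Real.exp_pos (-2*t)
    nlinarith
  have hv1 : ∀ t > (0:ℝ), H + (1 - H) * Real.exp (-2 * t) < 1 := by
    intro t ht
    have h1 : Real.exp (-2*t) < 1 := Real.exp_lt_one_iff.2 (by linarith)
    nlinarith
  -- pointwise bound F t ≤ c / √(e^{2t}-1) on (0,∞)
  have hFle : ∀ t > (0:ℝ), F t ≤ (2 / Real.sqrt (1 - H)) / Real.sqrt (Real.exp (2*t) - 1) := by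
    intro t ht
    set v := H + (1 - H) * Real.exp (-2 * t) with hv
    have hv0' := hv0 t
    have hv1' := hv1 t ht
    have hexplt : Real.exp (-2*t) < 1 := Real.exp_lt_one_iff.2 (by linarith)
    have hexppos := Real.exp_pos (-2*t)
    have h1v : 1 - v ^ 2 ≥ (1 - H) * (1 - Real.exp (-2*t)) := by
      have hid : (1 - H) * (1 - Real.exp (-2*t)) = 1 - v := by rw [hv]; ring
      nlinarith
    have hs1 : Real.sqrt ((1 - H) * (1 - Real.exp (-2*t))) ≤ Real.sqrt (1 - v ^ 2) :=
      Real.sqrt_le_sqrt h1v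
    have hsmul : Real.sqrt ((1 - H) * (1 - Real.exp (-2*t)))
        = Real.sqrt (1 - H) * Real.sqrt (1 - Real.exp (-2*t)) :=
      Real.sqrt_mul (by linarith) _
    have hcosh : Real.exp t / 2 ≤ Real.cosh t := by
      rw [Real.cosh_eq]
      have := (Real.exp_pos (-t)).le
      linarith
    have hkey : Real.exp t * Real.sqrt (1 - Real.exp (-2*t)) = Real.sqrt (Real.exp (2*t) - 1) := by
      rw [← Real.sqrt_sq (Real.exp_pos t).le, ← Real.sqrt_mul (by positivity)]
      congr 1
      have h2 : Real.exp t ^ 2 = Real.exp (2*t) := by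
        rw [sq, ← Real.exp_add]; ring_nf
      have h3 : Real.exp (2*t) * Real.exp (-2*t) = 1 := by
        rw [← Real.exp_add]; norm_num
      nlinarith
    have hupos : (0:ℝ) < Real.exp (2*t) - 1 := by
      have : (1:ℝ) < Real.exp (2*t) := by
        rw [← Real.exp_zero]; exact Real.exp_lt_exp.2 (by linarith)
      linarith
    have hd0pos : (0:ℝ) < Real.sqrt (1 - H) * Real.sqrt (Real.exp (2*t) - 1) / 2 := by
      have h1 : (0:ℝ) < Real.sqrt (1 - H) := Real.sqrt_pos.2 (by linarith)
      have h2 : (0:ℝ) < Real.sqrt (Real.exp (2*t) - 1) := Real.sqrt_pos.2 hupos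
      positivity
    have hdge : Real.sqrt (1 - H) * Real.sqrt (Real.exp (2*t) - 1) / 2
        ≤ Real.cosh t * Real.sqrt (1 - v ^ 2) := by
      have h1 : Real.sqrt (1 - H) * Real.sqrt (Real.exp (2*t) - 1) / 2
          = (Real.exp t / 2) * (Real.sqrt (1 - H) * Real.sqrt (1 - Real.exp (-2*t))) := by
        rw [← hkey]; ring
      rw [h1, ← hsmul]
      have h2 : (0:ℝ) ≤ Real.sqrt ((1 - H) * (1 - Real.exp (-2*t))) := Real.sqrt_nonneg _
      have h3 : (0:ℝ) < Real.exp t / 2 := by positivity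
      calc Real.exp t / 2 * Real.sqrt ((1 - H) * (1 - Real.exp (-2*t)))
          ≤ Real.cosh t * Real.sqrt ((1 - H) * (1 - Real.exp (-2*t))) := by
            exact mul_le_mul_of_nonneg_right hcosh h2
        _ ≤ Real.cosh t * Real.sqrt (1 - v ^ 2) :=
            mul_le_mul_of_nonneg_left hs1 (Real.cosh_pos t).le
    have step : v / (Real.cosh t * Real.sqrt (1 - v ^ 2))
        ≤ 1 / (Real.sqrt (1 - H) * Real.sqrt (Real.exp (2*t) - 1) / 2) :=
      div_le_div₀ zero_le_one hv1'.le hd0pos hdge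
    have heq : 1 / (Real.sqrt (1 - H) * Real.sqrt (Real.exp (2*t) - 1) / 2)
        = (2 / Real.sqrt (1 - H)) / Real.sqrt (Real.exp (2*t) - 1) := by
      have h1 : Real.sqrt (1 - H) ≠ 0 := (Real.sqrt_pos.2 (by linarith)).ne'
      have h2 : Real.sqrt (Real.exp (2*t) - 1) ≠ 0 := (Real.sqrt_pos.2 hupos).ne'
      field_simp
    rw [hF]
    exact heq ▸ step
  -- F is nonnegative
  have hFnn : ∀ t : ℝ, 0 ≤ F t := by
    intro t
    exact div_nonneg (hv0 t).le (mul_nonneg (Real.cosh_pos t).le (Real.sqrt_nonneg _))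
  -- F is measurable
  have hFmeas : AEStronglyMeasurable F (volume.restrict (Set.Ioi (0:ℝ))) := by
    apply Measurable.aestronglyMeasurable
    apply Measurable.div
    · fun_prop
    · apply Measurable.mul (by fun_prop)
      exact Real.continuous_sqrt.measurable.comp (by fun_prop)
  -- F integrable on (0,∞)
  have hFint : IntegrableOn F (Set.Ioi (0:ℝ)) := by
    refine (aux_dom_int _ hc).mono' hFmeas ?_
    filter_upwards [ae_restrict_mem measurableSet_Ioi] with t ht
    rw [Real.norm_eq_abs, abs_of_nonneg (hFnn t)]
    exact hFle t ht
  -- pointwise: x ρ t ≤ v t on (0, r)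
  have hxle : ∀ t > (0:ℝ), x ρ t ≤ H + (1 - H) * Real.exp (-2 * t) := by
    intro t ht
    rw [hx]
    have hD : 0 < Real.sinh (2*ρ + 2*t) := Real.sinh_pos_iff.2 (by linarith)
    rw [div_le_iff₀ hD]
    have hP : (1:ℝ) < Real.exp (2*ρ) := by
      rw [← Real.exp_zero]; exact Real.exp_lt_exp.2 (by linarith)
    have hQ : (1:ℝ) < Real.exp (2*t) := by
      rw [← Real.exp_zero]; exact Real.exp_lt_exp.2 (by linarith)
    have hPpos : (0:ℝ) < Real.exp (2*ρ) := Real.exp_pos _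
    have hQpos : (0:ℝ) < Real.exp (2*t) := Real.exp_pos _
    have e1 : Real.exp (2*ρ + 2*t) = Real.exp (2*ρ) * Real.exp (2*t) := by
      rw [← Real.exp_add]
    have e2 : Real.exp (-(2*ρ + 2*t)) = (Real.exp (2*ρ) * Real.exp (2*t))⁻¹ := by
      rw [Real.exp_neg, e1]
    have e3 : Real.exp (-(2*ρ)) = (Real.exp (2*ρ))⁻¹ := Real.exp_neg _
    have e4 : Real.exp (-2*t) = (Real.exp (2*t))⁻¹ := by
      rw [show (-2*t : ℝ) = -(2*t) by ring, Real.exp_neg]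
    rw [Real.cosh_eq, Real.cosh_eq, Real.sinh_eq, Real.sinh_eq, e1, e2, e3, e4]
    have hPne : Real.exp (2*ρ) ≠ 0 := hPpos.ne'
    have hQne : Real.exp (2*t) ≠ 0 := hQpos.ne'
    rw [← sub_nonneg]
    have key : (H + (1 - H) * (Real.exp (2*t))⁻¹) *
          ((Real.exp (2*ρ) * Real.exp (2*t) - (Real.exp (2*ρ) * Real.exp (2*t))⁻¹) / 2) -
        (H * ((Real.exp (2*ρ) * Real.exp (2*t) + (Real.exp (2*ρ) * Real.exp (2*t))⁻¹) / 2) +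
          (Real.exp (2*ρ) - (Real.exp (2*ρ))⁻¹) / 2 - H * ((Real.exp (2*ρ) + (Real.exp (2*ρ))⁻¹) / 2))
        = ((Real.exp (2*t) ^ 2 - 1) + H * (Real.exp (2*t) - 1) ^ 2) /
            (2 * Real.exp (2*ρ) * Real.exp (2*t) ^ 2) := by
      field_simp
      ring
    rw [key]
    apply div_nonneg _ (by positivity)
    nlinarith [sq_nonneg (Real.exp (2*t) - 1)]
  -- pointwise: x ρ t > 0 on (0,∞)
  have hxpos : ∀ t > (0:ℝ), 0 < x ρ t := by
    intro t ht
    rw [hx]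
    have hD : 0 < Real.sinh (2*ρ + 2*t) := Real.sinh_pos_iff.2 (by linarith)
    apply div_pos _ hD
    have h1 : Real.cosh (2*ρ) ≤ Real.cosh (2*ρ + 2*t) := by
      apply Real.cosh_le_cosh.2
      rw [abs_of_pos (by linarith), abs_of_pos (by linarith)]
      linarith
    have h2 : 0 < Real.sinh (2*ρ) := Real.sinh_pos_iff.2 (by linarith)
    nlinarith
  -- integrand comparison on (0, r)
  have hptle : ∀ t ∈ Set.Ioo (0:ℝ) r,
      x ρ t / (Real.cosh t * Real.sqrt (1 - x ρ t ^ 2)) ≤ F t := by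
    intro t ht
    obtain ⟨ht0, _⟩ := ht
    set u := x ρ t with hu
    set v := H + (1 - H) * Real.exp (-2 * t) with hv
    have huv : u ≤ v := hxle t ht0
    have hupos' := hxpos t ht0
    have hv1' : v < 1 := hv1 t ht0
    have h1 : (0:ℝ) < 1 - v ^ 2 := by nlinarith [hv0 t]
    have h2 : 1 - v ^ 2 ≤ 1 - u ^ 2 := by nlinarith
    have hs : Real.sqrt (1 - v ^ 2) ≤ Real.sqrt (1 - u ^ 2) := Real.sqrt_le_sqrt h2
    have hden : (0:ℝ) < Real.cosh t * Real.sqrt (1 - v ^ 2) :=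
      mul_pos (Real.cosh_pos t) (Real.sqrt_pos.2 h1)
    exact div_le_div₀ (hv0 t).le huv hden
      (mul_le_mul_of_nonneg_left hs (Real.cosh_pos t).le)
  -- integrand nonneg on (0, r)
  have hptnn : ∀ t ∈ Set.Ioo (0:ℝ) r,
      0 ≤ x ρ t / (Real.cosh t * Real.sqrt (1 - x ρ t ^ 2)) := by
    intro t ht
    exact div_nonneg (hxpos t ht.1).le
      (mul_nonneg (Real.cosh_pos t).le (Real.sqrt_nonneg _))
  have step1 : (∫ t in Set.Ioo (0:ℝ) r,
      x ρ t / (Real.cosh t * Real.sqrt (1 - x ρ t ^ 2))) ≤ ∫ t in Set.Ioo (0:ℝ) r, F t := by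
    apply integral_mono_of_nonneg
    · filter_upwards [ae_restrict_mem measurableSet_Ioo] with t ht using hptnn t ht
    · exact hFint.mono_set Set.Ioo_subset_Ioi_self
    · filter_upwards [ae_restrict_mem measurableSet_Ioo] with t ht using hptle t ht
  have step2 : (∫ t in Set.Ioo (0:ℝ) r, F t) ≤ ∫ t in Set.Ioi (0:ℝ), F t := by
    apply setIntegral_mono_set hFint
    · filter_upwards with t using hFnn t
    · exact HasSubset.Subset.eventuallyLE Set.Ioo_subset_Ioi_self
  rw [hB]
  exact step1.trans step2
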